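/- Let n ≥ 1 and let A, ν, W_t, 𝒜_t, Π_ν and the (n−2)-skeleton S be as in the context, and let ε > 0. Then there exist positive constants K, c and t₀ > 1 such that for all t ≥ t₀: every point u ∈ 𝒜_t whose Euclidean distance from every point of (log t)·S = {(log t)·s : s ∈ S} is at least ε·log t lies within Euclidean distance K·t^{−c} of the set (log t)·Π_ν. (Away from a neighbourhood of the (n−2)-skeleton of the tropical amoeba, the amoeba 𝒜_t is within distance a constant multiple of a negative power of t of the rescaled tropical amoeba.) -/

import Mathlib

open scoped BigOperators

/-- The Laurent monomial `z^α = z₁^{a₁} ⋯ zₙ^{aₙ}` with integer exponents. -/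
noncomputable def laurentMonomial {n : ℕ} (α : Fin n → ℤ) (z : Fin n → ℂ) : ℂ :=
  ∏ i, z i ^ α i

/-- The Laurent polynomial `W_t(z) = -1 + ∑_{α ∈ A, α ≠ 0} t^{-ν(α)} z^α`. -/
noncomputable def Wfam {n : ℕ} (A : Finset (Fin n → ℤ)) (ν : (Fin n → ℤ) → ℝ)
    (t : ℝ) (z : Fin n → ℂ) : ℂ :=
  -1 + ∑ α ∈ A.filter (fun α => α ≠ 0), ((t ^ (-ν α) : ℝ) : ℂ) * laurentMonomial α z

/-- The logarithm map `Log(z) = (log |z₁|, …, log |zₙ|)`, valued in Euclidean space. -/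
noncomputable def LogMap {n : ℕ} (z : Fin n → ℂ) : EuclideanSpace ℝ (Fin n) :=
  WithLp.toLp 2 (fun i => Real.log ‖z i‖)

/-- The tropical amoeba `Π_ν`: points where `max_{α ∈ A} (⟨u, α⟩ - ν(α))` is attained
by at least two elements of `A`. -/
def tropAmoeba {n : ℕ} (A : Finset (Fin n → ℤ)) (ν : (Fin n → ℤ) → ℝ) :
    Set (EuclideanSpace ℝ (Fin n)) :=
  {u | ∃ α ∈ A, ∃ β ∈ A, α ≠ β ∧
      (∑ i, u i * (α i : ℝ)) - ν α = (∑ i, u i * (β i : ℝ)) - ν β ∧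
      ∀ γ ∈ A, (∑ i, u i * (γ i : ℝ)) - ν γ ≤ (∑ i, u i * (α i : ℝ)) - ν α}

/-- The `(n-2)`-skeleton of `Π_ν`: points where the maximum is attained
by at least three elements of `A`. -/
def tropSkeleton {n : ℕ} (A : Finset (Fin n → ℤ)) (ν : (Fin n → ℤ) → ℝ) :
    Set (EuclideanSpace ℝ (Fin n)) :=
  {u | ∃ α ∈ A, ∃ β ∈ A, ∃ γ ∈ A, α ≠ β ∧ α ≠ γ ∧ β ≠ γ ∧
      (∑ i, u i * (α i : ℝ)) - ν α = (∑ i, u i * (β i : ℝ)) - ν β ∧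
      (∑ i, u i * (α i : ℝ)) - ν α = (∑ i, u i * (γ i : ℝ)) - ν γ ∧
      ∀ δ ∈ A, (∑ i, u i * (δ i : ℝ)) - ν δ ≤ (∑ i, u i * (α i : ℝ)) - ν α}


open scoped RealInnerProductSpace


namespace Statement2Aux

variable {n : ℕ}

/-- integer vector as a point of Euclidean space -/
noncomputable def ev (α : Fin n → ℤ) : EuclideanSpace ℝ (Fin n) := WithLp.toLp 2 (fun i => (α i : ℝ))

noncomputable def phiF (ν : (Fin n → ℤ) → ℝ) (α : Fin n → ℤ)
    (u : EuclideanSpace ℝ (Fin n)) : ℝ :=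
  (∑ i, u i * (α i : ℝ)) - ν α

lemma inner_eq_sum (x y : EuclideanSpace ℝ (Fin n)) : ⟪x, y⟫ = ∑ i, x i * y i := by
  simp [PiLp.inner_apply, RCLike.inner_apply, mul_comm]

lemma phiF_sub (ν : (Fin n → ℤ) → ℝ) (α : Fin n → ℤ) (u v : EuclideanSpace ℝ (Fin n)) :
    phiF ν α v - phiF ν α u = ⟪v - u, ev α⟫ := by
  simp only [phiF, inner_eq_sum, ev]
  have h : ∀ i, (v - u) i * (α i : ℝ) = v i * (α i : ℝ) - u i * (α i : ℝ) := by
    intro i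
    have : (v - u) i = v i - u i := rfl
    rw [this]; ring
  rw [Finset.sum_congr rfl (fun i _ => h i), Finset.sum_sub_distrib]
  ring

lemma abs_phiF_sub_le (ν : (Fin n → ℤ) → ℝ) (α : Fin n → ℤ) (u v : EuclideanSpace ℝ (Fin n)) :
    |phiF ν α v - phiF ν α u| ≤ ‖ev α‖ * dist u v := by
  rw [phiF_sub]
  calc |⟪v - u, ev α⟫| ≤ ‖v - u‖ * ‖ev α‖ := abs_real_inner_le_norm _ _
  _ = ‖ev α‖ * dist u v := by rw [dist_eq_norm, ← norm_sub_rev u v]; ring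

lemma phiF_add_smul (ν : (Fin n → ℤ) → ℝ) (α : Fin n → ℤ) (u d : EuclideanSpace ℝ (Fin n))
    (s : ℝ) : phiF ν α (u + s • d) = phiF ν α u + s * ⟪d, ev α⟫ := by
  have h := phiF_sub ν α u (u + s • d)
  have h2 : (u + s • d) - u = s • d := by abel
  rw [h2, real_inner_smul_left] at h
  linarith

lemma ev_ne {α β : Fin n → ℤ} (h : α ≠ β) : ev α ≠ ev β := by
  intro he
  apply h
  funext i
  have : (ev α) i = (ev β) i := by rw [he]
  simpa [ev] using this

lemma one_le_norm_ev_sub {α β : Fin n → ℤ} (h : α ≠ β) : 1 ≤ ‖ev α - ev β‖ := by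
  obtain ⟨i, hi⟩ : ∃ i, α i ≠ β i := by
    by_contra hc; push_neg at hc; exact h (funext hc)
  have h1 : (1 : ℝ) ≤ |(α i : ℝ) - (β i : ℝ)| := by
    have h0 := Int.one_le_abs (sub_ne_zero.mpr hi)
    have h0' : (1 : ℝ) ≤ |((α i - β i : ℤ) : ℝ)| := by
      rw [← Int.cast_abs]; exact_mod_cast h0
    simpa using h0'
  have h2 : |(ev α - ev β) i| ≤ ‖ev α - ev β‖ := by
    rw [EuclideanSpace.norm_eq]
    rw [Real.le_sqrt (abs_nonneg _) (by positivity)]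
    have : |(ev α - ev β) i| ^ 2 = ‖(ev α - ev β) i‖ ^ 2 := by
      rw [Real.norm_eq_abs]
    rw [this]
    exact Finset.single_le_sum (f := fun j => ‖(ev α - ev β) j‖ ^ 2) (fun j _ => by positivity) (Finset.mem_univ i)
  have h3 : (ev α - ev β) i = (α i : ℝ) - (β i : ℝ) := rfl
  rw [h3] at h2
  linarith

lemma continuous_sup' {I : Type*} (B : Finset I) (hB : B.Nonempty) (g : I → ℝ → ℝ)
    (hg : ∀ i ∈ B, Continuous (g i)) :
    Continuous (fun s => B.sup' hB (fun i => g i s)) := by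
  induction hB using Finset.Nonempty.cons_induction with
  | singleton i => simp only [Finset.sup'_singleton]; exact hg i (by simp)
  | cons i B hi hB ih =>
      have : (fun s => (Finset.cons i B hi).sup' (by simp) (fun j => g j s))
           = fun s => max (g i s) (B.sup' hB (fun j => g j s)) := by
        funext s; rw [Finset.sup'_cons hB]
      rw [this]
      exact Continuous.max (hg i (by simp)) (ih (fun j hj => hg j (by simp [hj])))

lemma continuous_phiF_line (ν : (Fin n → ℤ) → ℝ) (α : Fin n → ℤ)
    (u d : EuclideanSpace ℝ (Fin n)) :
    Continuous (fun s : ℝ => phiF ν α (u + s • d)) := by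
  have : (fun s : ℝ => phiF ν α (u + s • d))
      = fun s : ℝ => phiF ν α u + s * ⟪d, ev α⟫ := by
    funext s; exact phiF_add_smul ν α u d s
  rw [this]; continuity


lemma step1 (A : Finset (Fin n → ℤ)) (ν : (Fin n → ℤ) → ℝ) (u : EuclideanSpace ℝ (Fin n))
    (α β : Fin n → ℤ) (hβ : β ∈ A) (hne : β ≠ α) (δ : ℝ) (hδ : 0 ≤ δ)
    (hmax : ∀ γ ∈ A, phiF ν γ u ≤ phiF ν α u) (hβ2 : phiF ν α u - δ ≤ phiF ν β u) :
    ∃ v, dist u v ≤ δ ∧ ∃ μ ∈ A, μ ≠ α ∧ phiF ν α v = phiF ν μ v ∧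
      ∀ γ ∈ A, phiF ν γ v ≤ phiF ν α v := by
  set w : EuclideanSpace ℝ (Fin n) := ev β - ev α with hw
  have hw0 : w ≠ 0 := sub_ne_zero.mpr (ev_ne hne)
  have hw1 : (1 : ℝ) ≤ ‖w‖ := one_le_norm_ev_sub hne
  have hwpos : (0 : ℝ) < ‖w‖ := by linarith
  set d : EuclideanSpace ℝ (Fin n) := ‖w‖⁻¹ • w with hd
  have hdnorm : ‖d‖ = 1 := by
    rw [hd, norm_smul, norm_inv, norm_norm]
    field_simp
  have hB : β ∈ A.erase α := Finset.mem_erase.mpr ⟨hne, hβ⟩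
  have hBne : (A.erase α).Nonempty := ⟨β, hB⟩
  set f : ℝ → ℝ := fun s =>
    phiF ν α (u + s • d) - (A.erase α).sup' hBne (fun γ => phiF ν γ (u + s • d)) with hf
  have hcont : Continuous f := by
    apply Continuous.sub (continuous_phiF_line ν α u d)
    exact continuous_sup' _ hBne _ (fun γ _ => continuous_phiF_line ν γ u d)
  have hf0 : 0 ≤ f 0 := by
    have : (A.erase α).sup' hBne (fun γ => phiF ν γ (u + (0:ℝ) • d)) ≤ phiF ν α (u + (0:ℝ) • d) := by
      apply Finset.sup'_le
      intro γ hγ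
      simpa using hmax γ (Finset.mem_of_mem_erase hγ)
    simp only [hf]; linarith
  have hinner : ⟪d, ev α⟫ - ⟪d, ev β⟫ = -‖w‖ := by
    rw [← inner_sub_right]
    have : ev α - ev β = -w := by rw [hw]; abel
    rw [this, inner_neg_right, hd, real_inner_smul_left, real_inner_self_eq_norm_sq]
    field_simp
  have hfδ : f δ ≤ 0 := by
    have h1 : phiF ν β (u + δ • d) ≤ (A.erase α).sup' hBne (fun γ => phiF ν γ (u + δ • d)) :=
      Finset.le_sup' (f := fun γ => phiF ν γ (u + δ • d)) hB
    have h2 : phiF ν α (u + δ • d) - phiF ν β (u + δ • d) ≤ 0 := by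
      rw [phiF_add_smul, phiF_add_smul]
      have : phiF ν α u + δ * ⟪d, ev α⟫ - (phiF ν β u + δ * ⟪d, ev β⟫)
          = (phiF ν α u - phiF ν β u) + δ * (⟪d, ev α⟫ - ⟪d, ev β⟫) := by ring
      rw [this, hinner]
      have : δ * -‖w‖ ≤ -δ := by nlinarith
      linarith
    simp only [hf]; linarith
  obtain ⟨s, hsIcc, hfs⟩ : ∃ s ∈ Set.Icc (0:ℝ) δ, f s = 0 := by
    have h := intermediate_value_Icc' hδ hcont.continuousOn
    have h0 : (0:ℝ) ∈ Set.Icc (f δ) (f 0) := ⟨hfδ, hf0⟩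
    obtain ⟨s, hs, hfs⟩ := h h0
    exact ⟨s, hs, hfs⟩
  refine ⟨u + s • d, ?_, ?_⟩
  · rw [dist_self_add_right, norm_smul, hdnorm, Real.norm_eq_abs,
      abs_of_nonneg hsIcc.1]
    simpa using hsIcc.2
  · obtain ⟨μ, hμB, hμeq⟩ := Finset.exists_mem_eq_sup' hBne (fun γ => phiF ν γ (u + s • d))
    refine ⟨μ, Finset.mem_of_mem_erase hμB, (Finset.mem_erase.mp hμB).1, ?_, ?_⟩
    · have : f s = 0 := hfs
      simp only [hf] at this
      rw [hμeq] at this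
      linarith
    · intro γ hγ
      rcases eq_or_ne γ α with h | h
      · rw [h]
      · have h1 : phiF ν γ (u + s • d) ≤ (A.erase α).sup' hBne (fun γ => phiF ν γ (u + s • d)) :=
          Finset.le_sup' (f := fun γ => phiF ν γ (u + s • d)) (Finset.mem_erase.mpr ⟨h, hγ⟩)
        have : f s = 0 := hfs
        simp only [hf] at this
        linarith


lemma phiF_diff (ν : (Fin n → ℤ) → ℝ) (a b : Fin n → ℤ) (x : EuclideanSpace ℝ (Fin n)) :
    phiF ν b x - phiF ν a x = ⟪x, ev b - ev a⟫ - (ν b - ν a) := by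
  simp only [phiF, inner_eq_sum]
  have h : ∀ i, x i * ((ev b - ev a) i) = x i * (b i : ℝ) - x i * (a i : ℝ) := by
    intro i
    have : (ev b - ev a) i = (b i : ℝ) - (a i : ℝ) := rfl
    rw [this]; ring
  rw [Finset.sum_congr rfl (fun i _ => h i), Finset.sum_sub_distrib]
  ring

noncomputable def qvec (a b p : Fin n → ℤ) : EuclideanSpace ℝ (Fin n) :=
  (ev p - ev a) - ((⟪ev p - ev a, ev b - ev a⟫ / ‖ev b - ev a‖ ^ 2) • (ev b - ev a))

noncomputable def ccon (ν : (Fin n → ℤ) → ℝ) (a b p : Fin n → ℤ) : ℝ :=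
  (⟪ev p - ev a, ev b - ev a⟫ / ‖ev b - ev a‖ ^ 2) * (ν b - ν a) - (ν p - ν a)

open Classical in
@[irreducible] noncomputable def hfun (ν : (Fin n → ℤ) → ℝ) (ε R : ℝ) (a b p : Fin n → ℤ) : ℝ :=
  if qvec a b p = 0 then
    (if ccon ν a b p = 0 then ε/2 else min (ε/2) (|ccon ν a b p| / (2*(1+2*R))))
  else min (ε/2) (ε * ‖qvec a b p‖ / (2*(1+2*R) + 2*‖qvec a b p‖))

lemma hfun_pos (ν : (Fin n → ℤ) → ℝ) {ε R : ℝ} (hε : 0 < ε) (hR : 0 ≤ R)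
    (a b p : Fin n → ℤ) : 0 < hfun ν ε R a b p := by
  classical
  unfold hfun
  split_ifs with h1 h2
  · linarith
  · apply lt_min (by linarith)
    have : 0 < |ccon ν a b p| := abs_pos.mpr h2
    positivity
  · apply lt_min (by linarith)
    have : 0 < ‖qvec a b p‖ := norm_pos_iff.mpr h1
    positivity

set_option maxHeartbeats 2000000 in
lemma third_gap (A : Finset (Fin n → ℤ)) (hA : A.Nonempty) (ν : (Fin n → ℤ) → ℝ)
    (ε : ℝ) (hε : 0 < ε) :
    ∃ θ > (0:ℝ), ∀ u : EuclideanSpace ℝ (Fin n),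
      (∀ s ∈ tropSkeleton A ν, ε ≤ dist u s) →
      ∀ α ∈ A, (∀ γ' ∈ A, phiF ν γ' u ≤ phiF ν α u) →
      ∀ β ∈ A, ∀ γ ∈ A, β ≠ α → γ ≠ α → β ≠ γ →
      phiF ν α u - θ ≤ phiF ν β u → phiF ν α u - θ ≤ phiF ν γ u → False := by
  classical
  set R : ℝ := A.sup' hA (fun γ => ‖ev γ‖) with hRdef
  have hR : ∀ γ ∈ A, ‖ev γ‖ ≤ R := fun γ hγ => Finset.le_sup' (f := fun γ => ‖ev γ‖) hγ
  have hR0 : 0 ≤ R := by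
    obtain ⟨a, ha⟩ := hA
    exact le_trans (norm_nonneg _) (hR a ha)
  set T := A ×ˢ (A ×ˢ A) with hT
  have hTne : T.Nonempty := by
    obtain ⟨a, ha⟩ := hA
    exact ⟨(a, a, a), by simp [hT, ha]⟩
  set θ : ℝ := T.inf' hTne (fun τ => hfun ν ε R τ.1 τ.2.1 τ.2.2) with hθdef
  have hθpos : 0 < θ := by
    rw [hθdef, Finset.lt_inf'_iff]
    exact fun τ _ => hfun_pos ν hε hR0 _ _ _
  have hθle : ∀ a ∈ A, ∀ b ∈ A, ∀ p ∈ A, θ ≤ hfun ν ε R a b p := by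
    intro a ha b hb p hp
    have hmem : ((a, (b, p)) : (Fin n → ℤ) × ((Fin n → ℤ) × (Fin n → ℤ))) ∈ T := by
      rw [hT]
      exact Finset.mem_product.mpr ⟨ha, Finset.mem_product.mpr ⟨hb, hp⟩⟩
    rw [hθdef]
    exact Finset.inf'_le (fun τ => hfun ν ε R τ.1 τ.2.1 τ.2.2) hmem
  have hθhalf : θ ≤ ε / 2 := by
    obtain ⟨a, ha⟩ := hA
    refine le_trans (hθle a ha a ha a ha) ?_
    unfold hfun
    split_ifs <;> first | exact le_refl _ | exact min_le_left _ _
  refine ⟨θ, hθpos, ?_⟩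
  intro u hfar α hαA hαmax β hβA γ hγA hβα hγα hβγ hβθ hγθ
  -- Step A: find a tie point v at distance ≤ θ
  obtain ⟨v, hdistv, μ, hμA, hμα, htie, hmaxv⟩ :=
    step1 A ν u α β hβA hβα θ (le_of_lt hθpos) hαmax (by linarith)
  -- the third element π
  set π : Fin n → ℤ := if μ = β then γ else β with hπdef
  have hπA : π ∈ A := by rw [hπdef]; split_ifs <;> assumption
  have hπα : π ≠ α := by rw [hπdef]; split_ifs <;> assumption
  have hπμ : π ≠ μ := by
    rw [hπdef]; split_ifs with h
    · exact fun he => hβγ ((he.trans h).symm)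
    · exact fun he => h he.symm
  have hπθ : phiF ν α u - θ ≤ phiF ν π u := by
    rw [hπdef]; split_ifs <;> assumption
  -- gap at v to π
  have hlipπ : |phiF ν π v - phiF ν π u| ≤ R * θ := by
    refine le_trans (abs_phiF_sub_le ν π u v) ?_
    exact mul_le_mul (hR π hπA) hdistv dist_nonneg hR0
  have hlipα : |phiF ν α v - phiF ν α u| ≤ R * θ := by
    refine le_trans (abs_phiF_sub_le ν α u v) ?_
    exact mul_le_mul (hR α hαA) hdistv dist_nonneg hR0
  have hgap2u : phiF ν α v - phiF ν π v ≤ (1 + 2*R) * θ := by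
    have h1 := abs_le.mp hlipπ
    have h2 := abs_le.mp hlipα
    nlinarith [hπθ]
  have hgap2l : 0 ≤ phiF ν α v - phiF ν π v := by linarith [hmaxv π hπA]
  -- triple data
  set w : EuclideanSpace ℝ (Fin n) := ev μ - ev α with hwdef
  have hwne : w ≠ 0 := sub_ne_zero.mpr (ev_ne (fun he => hμα he))
  have hwnorm : (0:ℝ) < ‖w‖ := norm_pos_iff.mpr hwne
  set κ : ℝ := ⟪ev π - ev α, w⟫ / ‖w‖ ^ 2 with hκdef
  have hqdef : qvec α μ π = (ev π - ev α) - κ • w := rfl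
  have hccdef : ccon ν α μ π = κ * (ν μ - ν α) - (ν π - ν α) := rfl
  have hinnervw : ⟪v, w⟫ = ν μ - ν α := by
    have h := phiF_diff ν α μ v
    rw [← htie] at h
    simp only [sub_self] at h
    rw [← hwdef] at h
    linarith [h]
  by_cases hq : qvec α μ π = 0
  · -- collinear case
    have hcoll : ev π - ev α = κ • w := by
      have := hq
      rw [hqdef] at this
      rwa [sub_eq_zero] at this
    have hcval : phiF ν π v - phiF ν α v = ccon ν α μ π := by
      rw [phiF_diff ν α π v, hcoll, real_inner_smul_right, hinnervw, hccdef]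
    by_cases hcc : ccon ν α μ π = 0
    · -- v is in the skeleton
      have hπv : phiF ν α v = phiF ν π v := by rw [hcc] at hcval; linarith
      have hvS : v ∈ tropSkeleton A ν := by
        refine ⟨α, hαA, μ, hμA, π, hπA, fun he => hμα he.symm, fun he => hπα he.symm,
          fun he => hπμ he.symm, htie, hπv, hmaxv⟩
      have := hfar v hvS
      have : ε ≤ θ := le_trans this hdistv
      linarith
    · -- impossible since |cc| ≤ (1+2R)θ but θ ≤ |cc|/(2(1+2R))
      have hccb : |ccon ν α μ π| ≤ (1 + 2*R) * θ := by
        rw [abs_le]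
        constructor <;> [linarith [hgap2u, hcval]; skip]
        rw [← hcval]; linarith
      have hθc : θ ≤ |ccon ν α μ π| / (2*(1+2*R)) := by
        have h := hθle α hαA μ hμA π hπA
        unfold hfun at h
        rw [if_pos hq, if_neg hcc] at h
        exact le_trans h (min_le_right _ _)
      have hccpos : 0 < |ccon ν α μ π| := abs_pos.mpr hcc
      have h2 : θ * (2*(1+2*R)) ≤ |ccon ν α μ π| := by
        rw [le_div_iff₀ (by positivity : (0:ℝ) < 2*(1+2*R))] at hθc
        exact hθc
      nlinarith [mul_pos hθpos (by linarith : (0:ℝ) < 1+2*R)]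
  · -- noncollinear case
    have hqnorm : (0:ℝ) < ‖qvec α μ π‖ := norm_pos_iff.mpr hq
    have hqw : ⟪qvec α μ π, w⟫ = 0 := by
      rw [hqdef, inner_sub_left, real_inner_smul_left, hκdef,
        real_inner_self_eq_norm_sq, div_mul_cancel₀ _ (pow_ne_zero 2 hwnorm.ne'), sub_self]
    have hqsum : ev π - ev α = qvec α μ π + κ • w := by rw [hqdef]; abel
    have hqq : ⟪qvec α μ π, ev π - ev α⟫ = ‖qvec α μ π‖ ^ 2 := by
      rw [hqsum, inner_add_right, real_inner_smul_right, hqw,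
        real_inner_self_eq_norm_sq]
      ring
    set d : EuclideanSpace ℝ (Fin n) := ‖qvec α μ π‖⁻¹ • qvec α μ π with hddef
    have hdnorm : ‖d‖ = 1 := by
      rw [hddef, norm_smul, norm_inv, norm_norm]
      exact inv_mul_cancel₀ hqnorm.ne'
    have hdw : ⟪d, w⟫ = 0 := by rw [hddef, real_inner_smul_left, hqw]; ring
    have hdπα : ⟪d, ev π - ev α⟫ = ‖qvec α μ π‖ := by
      rw [hddef, real_inner_smul_left, hqq, sq, ← mul_assoc,
        inv_mul_cancel₀ hqnorm.ne', one_mul]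
    have hdμα : ⟪d, ev μ⟫ = ⟪d, ev α⟫ := by
      have : ⟪d, ev μ - ev α⟫ = 0 := by rw [← hwdef]; exact hdw
      rw [inner_sub_right] at this
      linarith
    have hdπ : ⟪d, ev π⟫ - ⟪d, ev α⟫ = ‖qvec α μ π‖ := by
      rw [← hdπα, inner_sub_right]
    set gap2 : ℝ := phiF ν α v - phiF ν π v with hgapdef
    set S₀ : ℝ := gap2 / ‖qvec α μ π‖ with hS₀def
    have hS₀nn : 0 ≤ S₀ := div_nonneg hgap2l (le_of_lt hqnorm)
    -- tie preserved along d
    have htie' : ∀ s : ℝ, phiF ν α (v + s • d) = phiF ν μ (v + s • d) := by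
      intro s
      rw [phiF_add_smul, phiF_add_smul, htie, hdμα]
    have hπB : π ∈ (A.erase α).erase μ :=
      Finset.mem_erase.mpr ⟨hπμ, Finset.mem_erase.mpr ⟨hπα, hπA⟩⟩
    have hB'ne : ((A.erase α).erase μ).Nonempty := ⟨π, hπB⟩
    set g : ℝ → ℝ := fun s =>
      phiF ν α (v + s • d) - ((A.erase α).erase μ).sup' hB'ne (fun γ' => phiF ν γ' (v + s • d))
      with hgdef
    have hgcont : Continuous g := by
      apply Continuous.sub (continuous_phiF_line ν α v d)
      exact continuous_sup' _ hB'ne _ (fun γ' _ => continuous_phiF_line ν γ' v d)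
    have hg0 : 0 ≤ g 0 := by
      have : ((A.erase α).erase μ).sup' hB'ne (fun γ' => phiF ν γ' (v + (0:ℝ) • d))
          ≤ phiF ν α (v + (0:ℝ) • d) := by
        apply Finset.sup'_le
        intro γ' hγ'
        have hγ'A : γ' ∈ A := Finset.mem_of_mem_erase (Finset.mem_of_mem_erase hγ')
        simpa using hmaxv γ' hγ'A
      simp only [hgdef]; linarith
    have hgS₀ : g S₀ ≤ 0 := by
      have h1 : phiF ν π (v + S₀ • d) ≤
          ((A.erase α).erase μ).sup' hB'ne (fun γ' => phiF ν γ' (v + S₀ • d)) :=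
        Finset.le_sup' (f := fun γ' => phiF ν γ' (v + S₀ • d)) hπB
      have h2 : phiF ν α (v + S₀ • d) - phiF ν π (v + S₀ • d) = gap2 - S₀ * ‖qvec α μ π‖ := by
        rw [phiF_add_smul, phiF_add_smul]
        have : phiF ν α v + S₀ * ⟪d, ev α⟫ - (phiF ν π v + S₀ * ⟪d, ev π⟫)
            = gap2 - S₀ * (⟪d, ev π⟫ - ⟪d, ev α⟫) := by ring
        rw [this, hdπ]
      have h3 : gap2 - S₀ * ‖qvec α μ π‖ = 0 := by
        rw [hS₀def, div_mul_cancel₀ _ hqnorm.ne', sub_self]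
      simp only [hgdef]
      linarith
    obtain ⟨s, hsIcc, hgs⟩ : ∃ s ∈ Set.Icc (0:ℝ) S₀, g s = 0 := by
      have h := intermediate_value_Icc' hS₀nn hgcont.continuousOn
      obtain ⟨s, hs, hgs⟩ := h ⟨hgS₀, hg0⟩
      exact ⟨s, hs, hgs⟩
    obtain ⟨ρ, hρB, hρeq⟩ :=
      Finset.exists_mem_eq_sup' hB'ne (fun γ' => phiF ν γ' (v + s • d))
    have hρμ : ρ ≠ μ := (Finset.mem_erase.mp hρB).1
    have hρα : ρ ≠ α := (Finset.mem_erase.mp (Finset.mem_of_mem_erase hρB)).1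
    have hρA : ρ ∈ A := Finset.mem_of_mem_erase (Finset.mem_of_mem_erase hρB)
    set v' : EuclideanSpace ℝ (Fin n) := v + s • d with hv'def
    have hαρ : phiF ν α v' = phiF ν ρ v' := by
      have : g s = 0 := hgs
      simp only [hgdef] at this
      rw [hρeq] at this
      rw [hv'def]; linarith
    have hmaxv' : ∀ δ ∈ A, phiF ν δ v' ≤ phiF ν α v' := by
      intro δ hδ
      rcases eq_or_ne δ α with h | h
      · rw [h]
      rcases eq_or_ne δ μ with h2 | h2
      · rw [h2, hv'def, ← htie' s]
      · have hδB : δ ∈ (A.erase α).erase μ :=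
          Finset.mem_erase.mpr ⟨h2, Finset.mem_erase.mpr ⟨h, hδ⟩⟩
        have h1 : phiF ν δ (v + s • d) ≤
            ((A.erase α).erase μ).sup' hB'ne (fun γ' => phiF ν γ' (v + s • d)) :=
          Finset.le_sup' (f := fun γ' => phiF ν γ' (v + s • d)) hδB
        have : g s = 0 := hgs
        simp only [hgdef] at this
        rw [hv'def]; linarith
    have hv'S : v' ∈ tropSkeleton A ν := by
      refine ⟨α, hαA, μ, hμA, ρ, hρA, fun he => hμα he.symm, fun he => hρα he.symm,
        fun he => hρμ he.symm, (htie' s), hαρ, hmaxv'⟩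
    have hfarv' := hfar v' hv'S
    have hdistv' : dist u v' ≤ θ + S₀ := by
      refine le_trans (dist_triangle u v v') ?_
      have : dist v v' = s := by
        rw [hv'def, dist_self_add_right, norm_smul, hdnorm, Real.norm_eq_abs,
          abs_of_nonneg hsIcc.1, mul_one]
      rw [this]
      linarith [hsIcc.2]
    have hθq : θ ≤ ε * ‖qvec α μ π‖ / (2*(1+2*R) + 2*‖qvec α μ π‖) := by
      have h := hθle α hαA μ hμA π hπA
      unfold hfun at h
      rw [if_neg hq] at h
      exact le_trans h (min_le_right _ _)
    have hθq' : θ * (2*(1+2*R) + 2*‖qvec α μ π‖) ≤ ε * ‖qvec α μ π‖ := by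
      rw [le_div_iff₀ (by positivity)] at hθq
      exact hθq
    have hS₀b : S₀ ≤ (1+2*R) * θ / ‖qvec α μ π‖ := by
      rw [hS₀def]
      exact (div_le_div_iff_of_pos_right hqnorm).mpr (by rw [hgapdef]; exact hgap2u)
    have hkey : θ + (1+2*R) * θ / ‖qvec α μ π‖ ≤ ε / 2 := by
      rw [← mul_le_mul_iff_of_pos_right hqnorm]
      have hexp : (θ + (1+2*R) * θ / ‖qvec α μ π‖) * ‖qvec α μ π‖
          = θ * ‖qvec α μ π‖ + (1+2*R) * θ := by
        rw [add_mul, div_mul_cancel₀ _ hqnorm.ne']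
      rw [hexp]
      nlinarith
    linarith [hfarv', hdistv', hS₀b, hkey]


lemma mem_tropAmoeba (A : Finset (Fin n → ℤ)) (ν : (Fin n → ℤ) → ℝ)
    (v : EuclideanSpace ℝ (Fin n)) (α μ : Fin n → ℤ) (h1 : α ∈ A) (h2 : μ ∈ A)
    (h3 : α ≠ μ) (h4 : phiF ν α v = phiF ν μ v)
    (h5 : ∀ γ ∈ A, phiF ν γ v ≤ phiF ν α v) : v ∈ tropAmoeba A ν :=
  ⟨α, h1, μ, h2, h3, h4, h5⟩

end Statement2Aux


set_option maxHeartbeats 1000000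
open Statement2Aux

/-- Away from an `ε log t`-neighbourhood of the `(n-2)`-skeleton,
the amoeba `𝒜_t` is within distance `K · t^{-c}` of the rescaled tropical amoeba. -/
theorem statement2 (n : ℕ) (hn : 1 ≤ n) (A : Finset (Fin n → ℤ))
    (h0A : (0 : Fin n → ℤ) ∈ A) (ν : (Fin n → ℤ) → ℝ) (hν : ν 0 = 0)
    (ε : ℝ) (hε : 0 < ε) :
    ∃ K > (0 : ℝ), ∃ c > (0 : ℝ), ∃ t₀ > (1 : ℝ), ∀ t ≥ t₀,
      ∀ z : Fin n → ℂ, (∀ i, z i ≠ 0) → Wfam A ν t z = 0 →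
        (∀ s ∈ tropSkeleton A ν, ε * Real.log t ≤ dist (LogMap z) (Real.log t • s)) →
        ∃ v ∈ tropAmoeba A ν, dist (LogMap z) (Real.log t • v) ≤ K * t ^ (-c) := by
  classical
  obtain ⟨θ, hθpos, hθ⟩ := Statement2Aux.third_gap A ⟨0, h0A⟩ ν ε hε
  set N : ℝ := (A.card : ℝ) with hNdef
  have hN1 : (1:ℝ) ≤ N := by
    have h : 0 < A.card := Finset.card_pos.mpr ⟨0, h0A⟩
    rw [hNdef]
    exact_mod_cast h
  refine ⟨2 * N, by linarith, θ, hθpos, max 2 ((2*N) ^ (θ⁻¹ : ℝ)),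
    lt_of_lt_of_le one_lt_two (le_max_left _ _), ?_⟩
  intro t ht z hz hW hfar
  have ht2 : (2:ℝ) ≤ t := le_trans (le_max_left _ _) ht
  have ht1 : (1:ℝ) < t := by linarith
  have ht0 : (0:ℝ) < t := by linarith
  set L : ℝ := Real.log t with hLdef
  have hL0 : 0 < L := Real.log_pos ht1
  have htθpos : (0:ℝ) < t ^ (θ:ℝ) := Real.rpow_pos_of_pos ht0 _
  have hx : N * t ^ (-θ) ≤ 1/2 := by
    have h2 : ((2*N) ^ (θ⁻¹ : ℝ)) ≤ t := le_trans (le_max_right _ _) ht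
    have h3 : ((2*N) ^ (θ⁻¹ : ℝ)) ^ (θ : ℝ) ≤ t ^ (θ:ℝ) :=
      Real.rpow_le_rpow (Real.rpow_nonneg (by linarith) _) h2 (le_of_lt hθpos)
    have h1 : (2*N) ≤ t ^ (θ:ℝ) := by
      rwa [← Real.rpow_mul (by linarith : (0:ℝ) ≤ 2*N), inv_mul_cancel₀ hθpos.ne',
        Real.rpow_one] at h3
    rw [Real.rpow_neg ht0.le, inv_eq_one_div, mul_one_div,
      div_le_div_iff₀ htθpos two_pos]
    linarith
  have hxnn : 0 ≤ N * t ^ (-θ) := by positivity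
  set u : EuclideanSpace ℝ (Fin n) := L⁻¹ • LogMap z with hudef
  have hLog : LogMap z = L • u := by
    rw [hudef, smul_smul, mul_inv_cancel₀ hL0.ne', one_smul]
  have hdistscale : ∀ x y : EuclideanSpace ℝ (Fin n), dist (L • x) (L • y) = L * dist x y := by
    intro x y
    rw [dist_eq_norm, ← smul_sub, norm_smul, Real.norm_eq_abs, abs_of_pos hL0, ← dist_eq_norm]
  have hfar' : ∀ s ∈ tropSkeleton A ν, ε ≤ dist u s := by
    intro s hs
    have h := hfar s hs
    rw [hLog, hdistscale] at h
    exact le_of_mul_le_mul_left (by linarith) hL0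
  -- the terms and their absolute values
  set cterm : (Fin n → ℤ) → ℂ :=
    fun α => if α = 0 then -1 else ((t ^ (-ν α) : ℝ) : ℂ) * laurentMonomial α z with hcterm
  have hsum : ∑ α ∈ A, cterm α = 0 := by
    rw [← Finset.sum_filter_add_sum_filter_not A (fun α => α = 0)]
    have he : A.filter (fun α => α = 0) = {0} := by
      ext a
      simp only [Finset.mem_filter, Finset.mem_singleton]
      exact ⟨fun h => h.2, fun h => ⟨h ▸ h0A, h⟩⟩
    have h1 : ∑ α ∈ A.filter (fun α => α = 0), cterm α = -1 := by
      rw [he, Finset.sum_singleton, hcterm]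
      simp
    have h2 : ∑ α ∈ A.filter (fun α => ¬ α = 0), cterm α
        = ∑ α ∈ A.filter (fun α => α ≠ 0), ((t ^ (-ν α) : ℝ) : ℂ) * laurentMonomial α z := by
      apply Finset.sum_congr rfl
      intro α hα
      simp only [Finset.mem_filter] at hα
      simp only [hcterm, if_neg hα.2]
    rw [h1, h2]
    have := hW
    rw [Wfam] at this
    linear_combination this
  have habs : ∀ α ∈ A, ‖cterm α‖ = Real.exp (L * phiF ν α u) := by
    intro α hα
    have huai : ∀ i, u i * (α i : ℝ) = L⁻¹ * (Real.log ‖z i‖ * (α i : ℝ)) := by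
      intro i
      have : u i = L⁻¹ * Real.log ‖z i‖ := rfl
      rw [this]; ring
    rcases eq_or_ne α 0 with h0 | h0
    · rw [hcterm]
      simp only [h0, if_pos rfl]
      have : phiF ν (0 : Fin n → ℤ) u = 0 := by
        simp [phiF, hν]
      rw [this]
      simp
    · rw [hcterm]
      simp only [if_neg h0]
      rw [norm_mul]
      have hzabs : ∀ i, (0:ℝ) < ‖z i‖ := fun i => norm_pos_iff.mpr (hz i)
      have h1 : ‖((t ^ (-ν α) : ℝ) : ℂ)‖ = Real.exp (L * (-ν α)) := by
        rw [Complex.norm_real, Real.norm_eq_abs, abs_of_pos (Real.rpow_pos_of_pos ht0 _),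
          Real.rpow_def_of_pos ht0]
      have h2 : ‖laurentMonomial α z‖
          = Real.exp (∑ i, (α i : ℝ) * Real.log ‖z i‖) := by
        rw [laurentMonomial, norm_prod, Real.exp_sum]
        apply Finset.prod_congr rfl
        intro i _
        rw [norm_zpow]
        have hpos : (0:ℝ) < ‖z i‖ ^ (α i) := zpow_pos (hzabs i) _
        rw [← Real.exp_log hpos, Real.log_zpow]
      rw [h1, h2, ← Real.exp_add]
      congr 1
      rw [phiF]
      have hs2 : (∑ i, u i * (α i : ℝ))
          = L⁻¹ * ∑ i, (α i : ℝ) * Real.log ‖z i‖ := by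
        rw [Finset.mul_sum]
        refine Finset.sum_congr rfl (fun i _ => ?_)
        have hui : u i = L⁻¹ * Real.log ‖z i‖ := rfl
        rw [hui]; ring
      rw [hs2, mul_sub, ← mul_assoc, mul_inv_cancel₀ hL0.ne', one_mul]
      ring
  -- A has a nonzero element
  have hA' : (A.filter (fun α => α ≠ 0)).Nonempty := by
    rw [Finset.nonempty_iff_ne_empty]
    intro h
    rw [Wfam, h, Finset.sum_empty] at hW
    simpa using hW
  -- maximizer and second maximizer
  obtain ⟨αs, hαsA, hαsmax⟩ := Finset.exists_max_image A (fun γ => phiF ν γ u) ⟨0, h0A⟩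
  have hBne : (A.erase αs).Nonempty := by
    obtain ⟨a₀, ha₀⟩ := hA'
    obtain ⟨ha₀A, ha₀0⟩ := Finset.mem_filter.mp ha₀
    rcases eq_or_ne αs 0 with h | h
    · exact ⟨a₀, Finset.mem_erase.mpr ⟨by rw [h]; exact ha₀0, ha₀A⟩⟩
    · exact ⟨0, Finset.mem_erase.mpr ⟨fun he => h he.symm, h0A⟩⟩
  obtain ⟨βs, hβsB, hβsmax⟩ := Finset.exists_max_image (A.erase αs) (fun γ => phiF ν γ u) hBne
  have hβsA : βs ∈ A := Finset.mem_of_mem_erase hβsB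
  have hβsne : βs ≠ αs := (Finset.mem_erase.mp hβsB).1
  -- all other terms are small
  have hsmall : ∀ γ ∈ (A.erase αs).erase βs, phiF ν γ u ≤ phiF ν αs u - θ := by
    intro γ hγ
    have hγB : γ ∈ A.erase αs := Finset.mem_of_mem_erase hγ
    have hγA : γ ∈ A := Finset.mem_of_mem_erase hγB
    have hγβs : γ ≠ βs := (Finset.mem_erase.mp hγ).1
    have hγαs : γ ≠ αs := (Finset.mem_erase.mp hγB).1
    rcases le_or_gt (phiF ν βs u) (phiF ν αs u - θ) with h | h
    · exact le_trans (hβsmax γ hγB) h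
    · by_contra hcon
      push_neg at hcon
      exact hθ u hfar' αs hαsA hαsmax βs hβsA γ hγA hβsne hγαs
        (fun he => hγβs he.symm) (by linarith) (by linarith)
  -- the key estimate
  have hest : Real.exp (L * phiF ν αs u)
      ≤ Real.exp (L * phiF ν βs u) + N * t ^ (-θ) * Real.exp (L * phiF ν αs u) := by
    have hterm : cterm αs = -∑ γ ∈ A.erase αs, cterm γ := by
      have h := hsum
      rw [← Finset.add_sum_erase A cterm hαsA] at h
      exact eq_neg_of_add_eq_zero_left h
    have h1 : Real.exp (L * phiF ν αs u) ≤ ∑ γ ∈ A.erase αs, Real.exp (L * phiF ν γ u) := by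
      rw [← habs αs hαsA, hterm, norm_neg]
      refine le_trans (norm_sum_le _ _) ?_
      apply le_of_eq
      exact Finset.sum_congr rfl (fun γ hγ => habs γ (Finset.mem_of_mem_erase hγ))
    have h2 : ∑ γ ∈ A.erase αs, Real.exp (L * phiF ν γ u)
        = Real.exp (L * phiF ν βs u) + ∑ γ ∈ (A.erase αs).erase βs, Real.exp (L * phiF ν γ u) := by
      rw [← Finset.add_sum_erase (A.erase αs) _ hβsB]
    have h3 : ∑ γ ∈ (A.erase αs).erase βs, Real.exp (L * phiF ν γ u)
        ≤ N * t ^ (-θ) * Real.exp (L * phiF ν αs u) := by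
      have hb : ∀ γ ∈ (A.erase αs).erase βs,
          Real.exp (L * phiF ν γ u) ≤ t ^ (-θ) * Real.exp (L * phiF ν αs u) := by
        intro γ hγ
        have h4 : L * phiF ν γ u ≤ L * (phiF ν αs u - θ) :=
          mul_le_mul_of_nonneg_left (hsmall γ hγ) hL0.le
        calc Real.exp (L * phiF ν γ u) ≤ Real.exp (L * (phiF ν αs u - θ)) := Real.exp_le_exp.mpr h4
        _ = t ^ (-θ) * Real.exp (L * phiF ν αs u) := by
            rw [Real.rpow_def_of_pos ht0, ← Real.exp_add]
            congr 1
            ring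
      refine le_trans (Finset.sum_le_sum hb) ?_
      rw [Finset.sum_const, nsmul_eq_mul]
      have hcard : (((A.erase αs).erase βs).card : ℝ) ≤ N := by
        rw [hNdef]
        exact_mod_cast Finset.card_le_card
          (le_trans (Finset.erase_subset _ _) (Finset.erase_subset _ _))
      have hpos : (0:ℝ) ≤ t ^ (-θ) * Real.exp (L * phiF ν αs u) := by positivity
      nlinarith
    linarith
  -- deduce the two-term gap bound
  set x : ℝ := N * t ^ (-θ) with hxdef
  set δg : ℝ := phiF ν αs u - phiF ν βs u with hδgdef
  have hδg0 : 0 ≤ δg := by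
    rw [hδgdef]
    linarith [hαsmax βs hβsA]
  have hδgb : L * δg ≤ 2 * x := by
    have hE : (0:ℝ) < Real.exp (L * phiF ν βs u) := Real.exp_pos _
    have h1 : Real.exp (L * phiF ν αs u) * (1 - x) ≤ Real.exp (L * phiF ν βs u) := by
      nlinarith [hest]
    have h2 : Real.exp (L * δg) * (1 - x) ≤ 1 := by
      have h3 : Real.exp (L * δg) = Real.exp (L * phiF ν αs u) / Real.exp (L * phiF ν βs u) := by
        rw [← Real.exp_sub]
        congr 1
        rw [hδgdef]
        ring
      rw [h3, div_mul_eq_mul_div, div_le_one hE]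
      nlinarith
    have h4 : (1:ℝ) ≤ (1 - x) * Real.exp (2 * x) := by
      nlinarith [Real.add_one_le_exp (2 * x), hxnn, hx]
    have h5 : Real.exp (L * δg) ≤ Real.exp (2 * x) := by
      nlinarith [Real.exp_pos (L * δg), Real.exp_pos (2 * x)]
    exact Real.exp_le_exp.mp h5
  have hδgL : δg ≤ 2 * x / L := by
    rw [le_div_iff₀ hL0]
    linarith
  -- find the tie point
  obtain ⟨v, hdv, μ, hμA, hμαs, htie, hmaxv⟩ :=
    Statement2Aux.step1 A ν u αs βs hβsA hβsne δg hδg0 hαsmax (by rw [hδgdef]; linarith)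
  refine ⟨v, Statement2Aux.mem_tropAmoeba A ν v αs μ hαsA hμA (fun he => hμαs he.symm)
    htie hmaxv, ?_⟩
  rw [hLog, hdistscale]
  calc L * dist u v ≤ L * (2 * x / L) :=
        mul_le_mul_of_nonneg_left (le_trans hdv hδgL) hL0.le
  _ = 2 * x := by field_simp
  _ = 2 * N * t ^ (-θ) := by rw [hxdef]; ring
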